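/- Let ε, δ ∈ (0,1), let n₀ = ⌈9/ε²⌉ and m = ⌈6·log(2/δ)⌉, and let (X_{j,t}), for j ∈ [m] and t ∈ [n₀], be i.i.d. real random variables with mean μ and variance at most V. Let Y_j = (1/n₀) Σ_{t=1}^{n₀} X_{j,t} be the mean of the j-th group, and let Y be a median of Y_1, …, Y_m. Then P(|Y − μ| ≤ (ε/√2)·√V) ≥ 1 − δ/2. -/

import Mathlib

open MeasureTheory ProbabilityTheory Finset

theorem aux_blocks {Ω ι κ : Type*} {mΩ : MeasurableSpace Ω} {μ : Measure Ω}
    [IsProbabilityMeasure μ]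
    (M : ι × κ → MeasurableSpace Ω) (h_le : ∀ p, M p ≤ mΩ)
    (h_indep : ProbabilityTheory.iIndep M μ) (C : ι → Set Ω)
    (hC : ∀ j, MeasurableSet[⨆ t, M (j, t)] (C j)) (s : Finset ι) :
    μ (⋂ j ∈ s, C j) = ∏ j ∈ s, μ (C j) := by
  classical
  induction s using Finset.induction_on with
  | empty => simp
  | @insert a s ha ih =>
    have hSle : (⨆ t, M (a, t)) ≤ ⨆ p ∈ {p : ι × κ | p.1 = a}, M p :=
      iSup_le fun t => le_iSup₂ (f := fun p (_ : p ∈ {p : ι × κ | p.1 = a}) => M p) (a, t) rfl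
    have hTle : ∀ j ∈ s, (⨆ t, M (j, t)) ≤ ⨆ p ∈ {p : ι × κ | p.1 ∈ s}, M p := fun j hj =>
      iSup_le fun t => le_iSup₂ (f := fun p (_ : p ∈ {p : ι × κ | p.1 ∈ s}) => M p) (j, t) hj
    have hdisj : Disjoint {p : ι × κ | p.1 = a} {p : ι × κ | p.1 ∈ s} := by
      rw [Set.disjoint_left]
      rintro ⟨j, t⟩ h1 h2
      simp only [Set.mem_setOf_eq] at h1 h2
      exact ha (h1 ▸ h2)
    have hIndep : ProbabilityTheory.Indep (⨆ p ∈ {p : ι × κ | p.1 = a}, M p)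
        (⨆ p ∈ {p : ι × κ | p.1 ∈ s}, M p) μ :=
      ProbabilityTheory.indep_iSup_of_disjoint h_le h_indep hdisj
    have hIndep2 : ProbabilityTheory.Indep (⨆ t, M (a, t))
        (⨆ p ∈ {p : ι × κ | p.1 ∈ s}, M p) μ :=
      ProbabilityTheory.indep_of_indep_of_le_left hIndep hSle
    have hmeasInter : MeasurableSet[⨆ p ∈ {p : ι × κ | p.1 ∈ s}, M p] (⋂ j ∈ s, C j) :=
      MeasurableSet.biInter s.countable_toSet fun j hj => (hTle j hj) _ (hC j)
    have hmul := (ProbabilityTheory.Indep_iff _ _ _).1 hIndep2 _ _ (hC a) hmeasInter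
    rw [Finset.set_biInter_insert, Finset.prod_insert ha, hmul, ih]

set_option maxHeartbeats 1000000 in
/-- median-of-means concentration. With `n₀ = ⌈9/ε²⌉` and
`m = ⌈6 log(2/δ)⌉`, for i.i.d. real random variables `X j t` (for `j ∈ [m]`, `t ∈ [n₀]`)
with mean `μ₀` and variance at most `V`, letting `Y j` be the mean of the `j`-th group
and `Y` a median of the `Y j`'s, we have
`P(|Y − μ₀| ≤ (ε/√2)·√V) ≥ 1 − δ/2`. -/
theorem stmt1 {Ω : Type*} [MeasurableSpace Ω] (μ : Measure Ω) [IsProbabilityMeasure μ]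
    (ε δ : ℝ) (hε : ε ∈ Set.Ioo (0:ℝ) 1) (hδ : δ ∈ Set.Ioo (0:ℝ) 1)
    (n₀ m : ℕ) (hn₀ : n₀ = ⌈(9:ℝ) / ε ^ 2⌉₊) (hm : m = ⌈(6:ℝ) * Real.log (2 / δ)⌉₊)
    (μ₀ V : ℝ) (hV : 0 ≤ V)
    (X : Fin m → Fin n₀ → Ω → ℝ)
    (hmeas : ∀ j t, Measurable (X j t))
    (hindep : iIndepFun
      (fun jt : Fin m × Fin n₀ => X jt.1 jt.2) μ)
    (hident : ∀ j t j' t', IdentDistrib (X j t) (X j' t') μ μ)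
    (hL2 : ∀ j t, MemLp (X j t) 2 μ)
    (hmean : ∀ j t, ∫ ω, X j t ω ∂μ = μ₀)
    (hvar : ∀ j t, ∫ ω, (X j t ω - μ₀) ^ 2 ∂μ ≤ V)
    (Yg : Fin m → Ω → ℝ) (hYg : ∀ j ω, Yg j ω = (1 / (n₀ : ℝ)) * ∑ t, X j t ω)
    (Y : Ω → ℝ)
    (hmedle : ∀ ω, ⌈(m : ℝ) / 2⌉₊ ≤ (univ.filter (fun j : Fin m => Yg j ω ≤ Y ω)).card)
    (hmedge : ∀ ω, ⌈(m : ℝ) / 2⌉₊ ≤ (univ.filter (fun j : Fin m => Y ω ≤ Yg j ω)).card) :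
    ENNReal.ofReal (1 - δ / 2) ≤
      μ {ω | |Y ω - μ₀| ≤ (ε / Real.sqrt 2) * Real.sqrt V} := by
  classical
  obtain ⟨hε0, hε1⟩ := hε
  obtain ⟨hδ0, hδ1⟩ := hδ
  set r : ℝ := (ε / Real.sqrt 2) * Real.sqrt V with hrdef
  have hr0 : 0 ≤ r := by positivity
  have hn₀pos : 0 < n₀ := by
    rw [hn₀]; exact Nat.ceil_pos.mpr (by positivity)
  have hn₀ne : ((n₀ : ℝ)) ≠ 0 := Nat.cast_ne_zero.mpr hn₀pos.ne'
  have hn₀ge : (9:ℝ) / ε ^ 2 ≤ (n₀ : ℝ) := by rw [hn₀]; exact Nat.le_ceil _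
  have hlogpos : 0 < Real.log (2 / δ) := Real.log_pos (by rw [lt_div_iff₀ hδ0]; linarith)
  have hmpos : 0 < m := by
    rw [hm]; exact Nat.ceil_pos.mpr (by positivity)
  have hmge : (6:ℝ) * Real.log (2 / δ) ≤ (m : ℝ) := by rw [hm]; exact Nat.le_ceil _
  have hYgfun : ∀ j, Yg j = fun ω => (1 / (n₀:ℝ)) * ∑ t, X j t ω := fun j => funext (hYg j)
  have hYgmeas : ∀ j, Measurable (Yg j) := by
    intro j; rw [hYgfun j]
    exact (Finset.measurable_sum univ fun t _ => hmeas j t).const_mul _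
  set T : Set Ω := {ω | |Y ω - μ₀| ≤ r} with hT
  rcases eq_or_lt_of_le hV with hV0 | hVpos
  · -- degenerate case V = 0
    have hXae : ∀ᵐ ω ∂μ, ∀ p : Fin m × Fin n₀, X p.1 p.2 ω = μ₀ := by
      rw [MeasureTheory.ae_all_iff]
      rintro ⟨j, t⟩
      have hint : Integrable (fun ω => (X j t ω - μ₀)^2) μ :=
        ((hL2 j t).sub (memLp_const μ₀)).integrable_sq
      have h0 : ∫ ω, (X j t ω - μ₀)^2 ∂μ = 0 :=
        le_antisymm (hV0 ▸ hvar j t) (integral_nonneg fun ω => sq_nonneg _)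
      have hz := (integral_eq_zero_iff_of_nonneg (fun ω => sq_nonneg _) hint).1 h0
      filter_upwards [hz] with ω hω
      have hω' : (X j t ω - μ₀)^2 = 0 := hω
      have := pow_eq_zero_iff (n := 2) (by norm_num) |>.1 hω'
      linarith [sub_eq_zero.mp this]
    set A : Set Ω := {ω | ∀ p : Fin m × Fin n₀, X p.1 p.2 ω = μ₀} with hA
    have hAmeas : MeasurableSet A := by
      have : A = ⋂ p : Fin m × Fin n₀, {ω | X p.1 p.2 ω = μ₀} := by
        ext ω; simp [hA, Set.mem_iInter]
      rw [this]
      exact MeasurableSet.iInter fun p => measurableSet_eq_fun (hmeas p.1 p.2) measurable_const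
    have hA1 : μ A = 1 := by
      rw [← prob_compl_eq_zero_iff hAmeas, hA, Set.compl_setOf]
      rw [MeasureTheory.ae_iff] at hXae
      exact hXae
    have hAT : A ⊆ T := by
      intro ω hω
      have hYgω : ∀ j, Yg j ω = μ₀ := by
        intro j
        rw [hYg j ω]
        have hXω : ∀ t : Fin n₀, X j t ω = μ₀ := fun t => hω (j, t)
        rw [Finset.sum_congr rfl fun t _ => hXω t]
        simp [Finset.sum_const, Finset.card_univ]
        field_simp
      have hceilpos : 0 < ⌈(m:ℝ)/2⌉₊ := Nat.ceil_pos.mpr (by positivity)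
      have hle : μ₀ ≤ Y ω := by
        obtain ⟨j, hj⟩ := Finset.card_pos.mp (lt_of_lt_of_le hceilpos (hmedle ω))
        have := (Finset.mem_filter.mp hj).2
        rwa [hYgω j] at this
      have hge : Y ω ≤ μ₀ := by
        obtain ⟨j, hj⟩ := Finset.card_pos.mp (lt_of_lt_of_le hceilpos (hmedge ω))
        have := (Finset.mem_filter.mp hj).2
        rwa [hYgω j] at this
      have : Y ω = μ₀ := le_antisymm hge hle
      show |Y ω - μ₀| ≤ r
      simp [this, hr0]
    calc ENNReal.ofReal (1 - δ/2) ≤ 1 := ENNReal.ofReal_le_one.mpr (by linarith)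
      _ = μ A := hA1.symm
      _ ≤ μ T := measure_mono hAT
  · -- main case V > 0
    have hsqV : 0 < Real.sqrt V := Real.sqrt_pos.mpr hVpos
    have hrpos : 0 < r := by rw [hrdef]; positivity
    have hr2 : r ^ 2 = ε^2 * V / 2 := by
      rw [hrdef, mul_pow, div_pow, Real.sq_sqrt hV, Real.sq_sqrt (by norm_num : (0:ℝ) ≤ 2)]
      ring
    set B : Fin m → Set Ω := fun j => {ω | r < |Yg j ω - μ₀|} with hB
    have hBmeas : ∀ j, MeasurableSet (B j) := fun j =>
      measurableSet_lt measurable_const ((hYgmeas j).sub measurable_const).abs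
    have hint1 : ∀ j t, Integrable (X j t) μ := fun j t => (hL2 j t).integrable one_le_two
    have hYgmean : ∀ j, ∫ ω, Yg j ω ∂μ = μ₀ := by
      intro j
      rw [hYgfun j, MeasureTheory.integral_const_mul,
        integral_finset_sum _ (fun t _ => hint1 j t),
        Finset.sum_congr rfl (fun (t : Fin n₀) _ => hmean j t)]
      simp [Finset.sum_const, Finset.card_univ]
      field_simp
    have hYgL2 : ∀ j, MemLp (Yg j) 2 μ := by
      intro j
      rw [hYgfun j]
      have hsum : MemLp (fun ω => ∑ t, X j t ω) 2 μ := by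
        have h := memLp_finset_sum' (univ : Finset (Fin n₀)) (fun t _ => hL2 j t)
        have he : (∑ t : Fin n₀, X j t) = fun ω => ∑ t, X j t ω := by
          ext ω; simp
        rwa [he] at h
      exact hsum.const_mul _
    have hvarX : ∀ j t, variance (X j t) μ ≤ V := by
      intro j t
      rw [variance_eq_integral (hL2 j t).aemeasurable]
      simp only [Pi.pow_apply, Pi.sub_apply, hmean j t]
      exact hvar j t
    have hvarYg : ∀ j, variance (Yg j) μ ≤ V / n₀ := by
      intro j
      have h1 : variance (Yg j) μ = (1/(n₀:ℝ))^2 * variance (∑ t, X j t) μ := by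
        rw [hYgfun j]
        have he : (fun ω => (1/(n₀:ℝ)) * ∑ t, X j t ω)
            = fun ω => (1/(n₀:ℝ)) * (∑ t, X j t) ω := by
          ext ω; simp
        rw [he, variance_const_mul]
      have h2 : variance (∑ t, X j t) μ = ∑ t, variance (X j t) μ := by
        apply IndepFun.variance_sum (fun t _ => hL2 j t)
        intro t ht t' ht' htt'
        have hne : ((j,t) : Fin m × Fin n₀) ≠ (j, t') := by simp [htt']
        exact hindep.indepFun hne
      have h3 : ∑ t : Fin n₀, variance (X j t) μ ≤ (n₀ : ℝ) * V := by
        calc ∑ t : Fin n₀, variance (X j t) μ ≤ ∑ _t : Fin n₀, V :=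
              Finset.sum_le_sum fun t _ => hvarX j t
          _ = (n₀ : ℝ) * V := by simp [Finset.sum_const, Finset.card_univ, nsmul_eq_mul]
      rw [h1, h2]
      calc (1/(n₀:ℝ))^2 * ∑ t, variance (X j t) μ ≤ (1/(n₀:ℝ))^2 * ((n₀:ℝ) * V) := by
            apply mul_le_mul_of_nonneg_left h3 (by positivity)
        _ = V / n₀ := by field_simp
    have hcheb : ∀ j, μ (B j) ≤ ENNReal.ofReal (2/9) := by
      intro j
      have h1 : μ (B j) ≤ ENNReal.ofReal (variance (Yg j) μ / r^2) := by
        refine le_trans (measure_mono ?_) (meas_ge_le_variance_div_sq (hYgL2 j) hrpos)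
        intro ω hω
        simp only [hB, Set.mem_setOf_eq] at hω ⊢
        rw [hYgmean j]
        exact le_of_lt hω
      refine le_trans h1 (ENNReal.ofReal_le_ofReal ?_)
      rw [hr2]
      have hn' : (9:ℝ) ≤ ε^2 * n₀ := by
        rw [div_le_iff₀ (by positivity)] at hn₀ge; linarith
      have hd : (0:ℝ) < ε^2*V/2 := div_pos (mul_pos (pow_pos hε0 2) hVpos) (by norm_num)
      have h3 : variance (Yg j) μ / (ε^2*V/2) ≤ (V/(n₀:ℝ)) / (ε^2*V/2) :=
        (div_le_div_iff_of_pos_right hd).mpr (hvarYg j)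
      refine le_trans h3 ?_
      have h4 : (V/n₀) / (ε^2*V/2) = 2/(ε^2*n₀) := by
        field_simp
      rw [h4]
      rw [div_le_div_iff₀ (by positivity) (by norm_num)]
      linarith
    have hp : ∀ j, (μ (B j)).toReal ≤ 2/9 := fun j =>
      ENNReal.toReal_le_of_le_ofReal (by norm_num) (hcheb j)
    set Z : Fin m → Ω → ℝ := fun j => (B j).indicator (fun _ => 1) with hZ
    have hZmeas : ∀ j, Measurable (Z j) := fun j => measurable_const.indicator (hBmeas j)
    have hZ01 : ∀ j ω, Z j ω = if ω ∈ B j then 1 else 0 := fun j ω => by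
      simp [hZ, Set.indicator]
    -- independence of the group indicators
    set Mf : Fin m × Fin n₀ → MeasurableSpace Ω :=
      fun p => MeasurableSpace.comap (X p.1 p.2) inferInstance with hMf
    have hMle : ∀ p, Mf p ≤ ‹MeasurableSpace Ω› := fun p => (hmeas p.1 p.2).comap_le
    have hMiIndep : ProbabilityTheory.iIndep Mf μ := hindep.iIndep
    have hZM : ∀ j, Measurable[⨆ t, Mf (j, t)] (Z j) := by
      intro j
      have hXM : ∀ t : Fin n₀, Measurable[⨆ t, Mf (j, t)] (X j t) := fun t =>
        Measurable.of_comap_le (le_iSup (fun t => Mf (j, t)) t)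
      have hYgM : Measurable[⨆ t, Mf (j, t)] (Yg j) := by
        rw [hYgfun j]
        exact (Finset.measurable_sum univ fun t _ => hXM t).const_mul _
      have hBM : MeasurableSet[⨆ t, Mf (j, t)] (B j) := by
        have hBe : B j = (fun ω => |Yg j ω - μ₀|) ⁻¹' (Set.Ioi r) := by
          ext ω; simp [hB, Set.mem_Ioi]
        rw [hBe]
        exact (measurable_abs.comp (hYgM.sub measurable_const)) measurableSet_Ioi
      refine Measurable.indicator ?_ hBM
      exact measurable_const
    have hZindep : iIndepFun Z μ := by
      rw [iIndepFun_iff_measure_inter_preimage_eq_mul]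
      intro S sets hsets
      set C : Fin m → Set Ω := fun j => Z j ⁻¹' (if j ∈ S then sets j else Set.univ) with hC
      have hCmeas : ∀ j, MeasurableSet[⨆ t, Mf (j, t)] (C j) := by
        intro j
        by_cases hj : j ∈ S
        · simpa only [hC, if_pos hj] using hZM j (hsets j hj)
        · simp only [hC, if_neg hj, Set.preimage_univ]
          exact MeasurableSet.univ
      have key := aux_blocks Mf hMle hMiIndep C hCmeas S
      have hEq : (⋂ j ∈ S, Z j ⁻¹' sets j) = ⋂ j ∈ S, C j := by
        apply Set.iInter₂_congr
        intro j hj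
        simp [hC, if_pos hj]
      have hEq2 : ∀ j ∈ S, μ (C j) = μ (Z j ⁻¹' sets j) := fun j hj => by
        simp [hC, if_pos hj]
      rw [hEq, key, Finset.prod_congr rfl hEq2]
    -- mgf bound
    have hexpZ : ∀ j, (fun ω => Real.exp (1 * Z j ω))
        = fun ω => (B j).indicator (fun _ => Real.exp 1 - 1) ω + 1 := by
      intro j; funext ω
      by_cases hω : ω ∈ B j
      · simp [hZ01 j ω, hω]
      · simp [hZ01 j ω, hω]
    have hexpint : ∀ j, Integrable (fun ω => Real.exp (1 * Z j ω)) μ := by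
      intro j; rw [hexpZ j]
      exact ((integrable_const _).indicator (hBmeas j)).add (integrable_const 1)
    have hmgf : ∀ j, mgf (Z j) μ 1 ≤ (7 + 2 * Real.exp 1) / 9 := by
      intro j
      have hval : mgf (Z j) μ 1 = (Real.exp 1 - 1) * (μ (B j)).toReal + 1 := by
        rw [mgf, hexpZ j,
          integral_add ((integrable_const _).indicator (hBmeas j)) (integrable_const 1),
          integral_indicator_const _ (hBmeas j), integral_const]
        simp [smul_eq_mul, mul_comm, measureReal_def]
      rw [hval]
      have h1 := hp j
      have h2 : (0:ℝ) ≤ (μ (B j)).toReal := ENNReal.toReal_nonneg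
      nlinarith [Real.exp_one_gt_d9]
    -- Chernoff bound
    have hSmeas : Measurable (fun ω => ∑ j, Z j ω) :=
      Finset.measurable_sum univ fun j _ => hZmeas j
    have hsum_apply : (∑ j, Z j) = fun ω => ∑ j, Z j ω := by
      funext ω; simp
    have hSint : Integrable (fun ω => Real.exp (1 * (∑ j, Z j) ω)) μ :=
      hZindep.integrable_exp_mul_sum hZmeas (fun j _ => hexpint j)
    have hchern : (μ {ω | (m:ℝ)/2 ≤ (∑ j, Z j) ω}).toReal
        ≤ Real.exp (-(1:ℝ) * ((m:ℝ)/2)) * mgf (∑ j, Z j) μ 1 :=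
      measure_ge_le_exp_mul_mgf ((m:ℝ)/2) zero_le_one hSint
    have hmgfsum : mgf (∑ j, Z j) μ 1 = ∏ j, mgf (Z j) μ 1 := hZindep.mgf_sum hZmeas univ
    have hmgfprod : ∏ j : Fin m, mgf (Z j) μ 1 ≤ ((7 + 2*Real.exp 1)/9)^m := by
      calc ∏ j : Fin m, mgf (Z j) μ 1 ≤ ∏ _j : Fin m, (7 + 2*Real.exp 1)/9 :=
            Finset.prod_le_prod (fun j _ => mgf_nonneg) (fun j _ => hmgf j)
        _ = ((7 + 2*Real.exp 1)/9)^m := by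
            simp [Finset.prod_const, Finset.card_univ, div_pow]
    -- numeric bound
    have hkey : Real.exp (-(1:ℝ) * ((m:ℝ)/2)) * ((7 + 2*Real.exp 1)/9)^m ≤ δ/2 := by
      have hb3 : Real.exp ((1:ℝ)/3)^(3:ℕ) = Real.exp 1 := by
        rw [← Real.exp_nat_mul]
        norm_num
      have hc : (7 + 2*Real.exp 1)/9 ≤ Real.exp ((1:ℝ)/3) := by
        have h1 := Real.exp_one_gt_d9
        have h2 := Real.exp_one_lt_d9
        have h3 : (0:ℝ) < Real.exp ((1:ℝ)/3) := Real.exp_pos _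
        nlinarith [sq_nonneg (Real.exp ((1:ℝ)/3) - 1.39), sq_nonneg (Real.exp ((1:ℝ)/3) + 1.39)]
      have h1 : ((7 + 2*Real.exp 1)/9)^m ≤ Real.exp ((m:ℝ)/3) := by
        calc ((7 + 2*Real.exp 1)/9)^m ≤ (Real.exp ((1:ℝ)/3))^m :=
              pow_le_pow_left₀ (by positivity) hc m
          _ = Real.exp ((m:ℝ) * (1/3)) := by rw [← Real.exp_nat_mul]
          _ = Real.exp ((m:ℝ)/3) := by ring_nf
      have h2 : Real.exp (-(1:ℝ) * ((m:ℝ)/2)) * Real.exp ((m:ℝ)/3)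
          = Real.exp (-(m:ℝ)/6) := by
        rw [← Real.exp_add]; ring_nf
      have h3 : Real.exp (-(m:ℝ)/6) ≤ δ/2 := by
        have hle : Real.exp (-(m:ℝ)/6) ≤ Real.exp (- Real.log (2/δ)) := by
          apply Real.exp_le_exp.mpr
          linarith
        rw [Real.exp_neg, Real.exp_log (by positivity)] at hle
        rw [inv_div] at hle
        exact hle
      calc Real.exp (-(1:ℝ) * ((m:ℝ)/2)) * ((7 + 2*Real.exp 1)/9)^m
          ≤ Real.exp (-(1:ℝ) * ((m:ℝ)/2)) * Real.exp ((m:ℝ)/3) :=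
            mul_le_mul_of_nonneg_left h1 (Real.exp_pos _).le
        _ = Real.exp (-(m:ℝ)/6) := h2
        _ ≤ δ/2 := h3
    -- median containment
    set G : Set Ω := {ω | (m:ℝ)/2 ≤ (∑ j, Z j) ω} with hG
    have hGmeas : MeasurableSet G := by
      rw [hG, hsum_apply]
      exact measurableSet_le measurable_const hSmeas
    have hsubset : Tᶜ ⊆ G := by
      intro ω hω
      simp only [hT, Set.mem_compl_iff, Set.mem_setOf_eq, not_le] at hω
      have hZnn : ∀ j, (0:ℝ) ≤ Z j ω := fun j => by
        rw [hZ01 j ω]; split <;> norm_num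
      have hhalf : ∀ (F : Finset (Fin m)), (∀ j ∈ F, Z j ω = 1) →
          ⌈(m:ℝ)/2⌉₊ ≤ F.card → (m:ℝ)/2 ≤ (∑ j, Z j) ω := by
        intro F hF hcard
        rw [hsum_apply]
        calc (m:ℝ)/2 ≤ (⌈(m:ℝ)/2⌉₊ : ℝ) := Nat.le_ceil _
          _ ≤ (F.card : ℝ) := Nat.cast_le.mpr hcard
          _ = ∑ j ∈ F, Z j ω := by
              rw [Finset.sum_congr rfl hF]
              simp
          _ ≤ ∑ j, Z j ω :=
              Finset.sum_le_sum_of_subset_of_nonneg (Finset.subset_univ F)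
                (fun j _ _ => hZnn j)
      rcases le_or_gt (Y ω) μ₀ with hc | hc
      · -- Y ω ≤ μ₀ ; then Y ω < μ₀ - r
        have hY : Y ω < μ₀ - r := by
          rw [abs_of_nonpos (by linarith)] at hω
          linarith
        refine hhalf (univ.filter (fun j => Yg j ω ≤ Y ω)) ?_ (hmedle ω)
        intro j hj
        have h1 : Yg j ω ≤ Y ω := (Finset.mem_filter.mp hj).2
        have h2 : r < |Yg j ω - μ₀| := by
          rw [abs_of_nonpos (by linarith)]
          linarith
        rw [hZ01 j ω]
        exact if_pos h2
      · -- μ₀ < Y ω ; then μ₀ + r < Y ω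
        have hY : μ₀ + r < Y ω := by
          rw [abs_of_pos (by linarith)] at hω
          linarith
        refine hhalf (univ.filter (fun j => Y ω ≤ Yg j ω)) ?_ (hmedge ω)
        intro j hj
        have h1 : Y ω ≤ Yg j ω := (Finset.mem_filter.mp hj).2
        have h2 : r < |Yg j ω - μ₀| := by
          rw [abs_of_pos (by linarith)]
          linarith
        rw [hZ01 j ω]
        exact if_pos h2
    -- conclusion
    have hGle : μ G ≤ ENNReal.ofReal (δ/2) := by
      rw [ENNReal.le_ofReal_iff_toReal_le (measure_ne_top μ G) (by positivity)]
      calc (μ G).toReal ≤ Real.exp (-(1:ℝ) * ((m:ℝ)/2)) * mgf (∑ j, Z j) μ 1 := hchern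
        _ ≤ Real.exp (-(1:ℝ) * ((m:ℝ)/2)) * ((7 + 2*Real.exp 1)/9)^m := by
            rw [hmgfsum]
            exact mul_le_mul_of_nonneg_left hmgfprod (Real.exp_pos _).le
        _ ≤ δ/2 := hkey
    calc ENNReal.ofReal (1 - δ/2) = 1 - ENNReal.ofReal (δ/2) := by
          rw [ENNReal.ofReal_sub _ (by positivity), ENNReal.ofReal_one]
      _ ≤ 1 - μ G := tsub_le_tsub_left hGle 1
      _ = μ Set.univ - μ G := by rw [measure_univ]
      _ = μ Gᶜ := (measure_compl hGmeas (measure_ne_top μ G)).symm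
      _ ≤ μ T := measure_mono (fun ω hω => by_contra fun h => hω (hsubset h))
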